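/- Let x* ∈ B (so h(x*) = 1) and let C(x*) = {s ∈ ℝ^n : s_i ≥ 0 for all i, and ∑_{i=1}^n α_i(x*) s_i ≤ 1}, where α_i(x*) = (N̄_i − 1 + ∏_{j≠i}(1 + x*_j)) / (L_i N̄_i). Then C(x*) is the maximal convex subset of the rate region R containing s(x*, N̄): every convex set D with D ⊆ R and s(x*, N̄) ∈ D satisfies D ⊆ C(x*). -/

import Mathlib

open Finset

noncomputable def Xfun (n : ℕ) (a : ℝ) (x N : Fin n → ℝ) : ℝ :=
  a + (∑ k, (N k - 1) * x k) + (∏ k, (1 + x k)) - 1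

noncomputable def sVec (n : ℕ) (a : ℝ) (L x N : Fin n → ℝ) : Fin n → ℝ :=
  fun i => N i * L i * x i / Xfun n a x N

noncomputable def hfun (n : ℕ) (a : ℝ) (x : Fin n → ℝ) : ℝ :=
  (∑ i, x i / (1 + x i)) + (1 - a) / ∏ j, (1 + x j)

def rateRegion (n : ℕ) (a : ℝ) (L Nlo Nhi : Fin n → ℝ) : Set (Fin n → ℝ) :=
  {u | ∃ x N : Fin n → ℝ, (∀ i, 0 ≤ x i) ∧ (∀ i, Nlo i ≤ N i ∧ N i ≤ Nhi i) ∧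
    u = sVec n a L x N}

noncomputable def alpha (n : ℕ) (L Nhi xs : Fin n → ℝ) (i : Fin n) : ℝ :=
  (Nhi i - 1 + ∏ j ∈ Finset.univ.erase i, (1 + xs j)) / (L i * Nhi i)

def Cset (n : ℕ) (L Nhi xs : Fin n → ℝ) : Set (Fin n → ℝ) :=
  {sv | (∀ i, 0 ≤ sv i) ∧ ∑ i, alpha n L Nhi xs i * sv i ≤ 1}

set_option linter.unusedSectionVars false

section Aux
variable {ι : Type*} [DecidableEq ι]

lemma one_le_prod_one_add (s : Finset ι) (f : ι → ℝ) (hf : ∀ i ∈ s, 0 ≤ f i) :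
    (1:ℝ) ≤ ∏ i ∈ s, (1 + f i) := by
  calc (1:ℝ) = ∏ _i ∈ s, 1 := by simp
  _ ≤ ∏ i ∈ s, (1 + f i) :=
    Finset.prod_le_prod (fun i _ => by norm_num) (fun i hi => by linarith [hf i hi])

/-- Monotonicity of `x ↦ ∏(1+x) - ∑ x` on the nonneg orthant, quantitative form. -/
lemma lemLB (s : Finset ι) (w v : ι → ℝ) (hw : ∀ i ∈ s, 0 ≤ w i)
    (hwv : ∀ i ∈ s, w i ≤ v i) :
    (∏ i ∈ s, (1 + w i)) + ∑ i ∈ s, (v i - w i) ≤ ∏ i ∈ s, (1 + v i) := by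
  classical
  induction s using Finset.induction_on with
  | empty => simp
  | insert b s ha ih =>
    have hw' : ∀ i ∈ s, 0 ≤ w i := fun i hi => hw i (mem_insert_of_mem hi)
    have hwv' : ∀ i ∈ s, w i ≤ v i := fun i hi => hwv i (mem_insert_of_mem hi)
    have ihs := ih hw' hwv'
    have h1 : (1:ℝ) ≤ ∏ i ∈ s, (1 + w i) := one_le_prod_one_add s w hw'
    have hsum : (0:ℝ) ≤ ∑ i ∈ s, (v i - w i) :=
      Finset.sum_nonneg fun i hi => by linarith [hwv' i hi]
    have hwb : 0 ≤ w b := hw b (mem_insert_self b s)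
    have hvb : w b ≤ v b := hwv b (mem_insert_self b s)
    rw [prod_insert ha, prod_insert ha, sum_insert ha]
    nlinarith [ihs, h1, hsum, hwb, hvb]

lemma sum_le_A (s : Finset ι) (β : ι → ℝ) (hβ : ∀ i ∈ s, 0 ≤ β i) (c : ℝ) (hc : 0 ≤ c) :
    ∑ i ∈ s, β i ≤ ∑ i ∈ s, β i * ∏ j ∈ s.erase i, (1 + c * β j) := by
  apply Finset.sum_le_sum
  intro i hi
  have h1 : (1:ℝ) ≤ ∏ j ∈ s.erase i, (1 + c * β j) :=
    one_le_prod_one_add _ _ (fun j hj => mul_nonneg hc (hβ j (mem_of_mem_erase hj)))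
  nlinarith [hβ i hi]

lemma E_nonneg (s : Finset ι) (β : ι → ℝ) (hβ : ∀ i ∈ s, 0 ≤ β i) :
    (0:ℝ) ≤ ((∑ i ∈ s, β i)^2 - ∑ i ∈ s, (β i)^2) / 2 := by
  have := Finset.sum_sq_le_sq_sum_of_nonneg hβ
  linarith

/-- Quadratic lower bound for `τ ↦ ∏ (1 + τ β i)` around `τ = c`. -/
lemma lemLA (s : Finset ι) (β : ι → ℝ) (hβ : ∀ i ∈ s, 0 ≤ β i)
    (c τ : ℝ) (hc : 0 ≤ c) (hτ : 0 ≤ τ) :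
    (∏ i ∈ s, (1 + c * β i))
      + (τ - c) * (∑ i ∈ s, β i * ∏ j ∈ s.erase i, (1 + c * β j))
      + (τ - c)^2 * (((∑ i ∈ s, β i)^2 - ∑ i ∈ s, (β i)^2) / 2)
      ≤ ∏ i ∈ s, (1 + τ * β i) := by
  classical
  induction s using Finset.induction_on with
  | empty => simp
  | insert b s ha ih =>
    have hβ' : ∀ i ∈ s, 0 ≤ β i := fun i hi => hβ i (mem_insert_of_mem hi)
    have hβb : 0 ≤ β b := hβ b (mem_insert_self b s)
    have ihs := ih hβ'
    set Pc := ∏ i ∈ s, (1 + c * β i) with hPc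
    set Pτ := ∏ i ∈ s, (1 + τ * β i) with hPτ
    set A := ∑ i ∈ s, β i * ∏ j ∈ s.erase i, (1 + c * β j) with hA
    set Sg := ∑ i ∈ s, β i with hSg
    set Sq := ∑ i ∈ s, (β i)^2 with hSq
    have hPc1 : (1:ℝ) ≤ Pc :=
      one_le_prod_one_add _ _ (fun j hj => mul_nonneg hc (hβ' j hj))
    have hASg : Sg ≤ A := sum_le_A s β hβ' c hc
    have hSg0 : 0 ≤ Sg := Finset.sum_nonneg hβ'
    have hE0 : (0:ℝ) ≤ (Sg^2 - Sq) / 2 := E_nonneg s β hβ'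
    have e1 : ∏ i ∈ insert b s, (1 + c * β i) = (1 + c * β b) * Pc := prod_insert ha
    have e2 : ∏ i ∈ insert b s, (1 + τ * β i) = (1 + τ * β b) * Pτ := prod_insert ha
    have e3 : ∑ i ∈ insert b s, β i * ∏ j ∈ (insert b s).erase i, (1 + c * β j)
        = β b * Pc + (1 + c * β b) * A := by
      rw [sum_insert ha, erase_insert ha]
      congr 1
      rw [hA, mul_sum]
      apply Finset.sum_congr rfl
      intro i hi
      have hbi : b ≠ i := fun h => ha (h ▸ hi)
      rw [Finset.erase_insert_of_ne hbi,
        prod_insert (fun h => ha (mem_of_mem_erase h))]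
      ring
    have e4 : ∑ i ∈ insert b s, β i = β b + Sg := sum_insert ha
    have e5 : ∑ i ∈ insert b s, (β i)^2 = (β b)^2 + Sq := sum_insert ha
    rw [e1, e2, e3, e4, e5]
    have hmul : (1 + τ * β b) * (Pc + (τ - c) * A + (τ - c)^2 * ((Sg^2 - Sq)/2))
        ≤ (1 + τ * β b) * Pτ := by
      apply mul_le_mul_of_nonneg_left ihs
      nlinarith [hβb, hτ]
    have hstep : (1 + c * β b) * Pc
        + (τ - c) * (β b * Pc + (1 + c * β b) * A)
        + (τ - c)^2 * (((β b + Sg)^2 - ((β b)^2 + Sq))/2)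
        ≤ (1 + τ * β b) * (Pc + (τ - c) * A + (τ - c)^2 * ((Sg^2 - Sq)/2)) := by
      nlinarith [mul_nonneg (mul_nonneg (sq_nonneg (τ - c)) hβb) (sub_nonneg.mpr hASg),
        mul_nonneg (mul_nonneg (mul_nonneg (sq_nonneg (τ - c)) hβb) hE0) hτ]
    linarith [hmul, hstep]

lemma abs_prod_le (s : Finset ι) (av bv : ι → ℝ) :
    |∏ i ∈ s, av i| ≤ ∏ i ∈ s, (2*(1+|av i|+|bv i|)) := by
  rw [Finset.abs_prod]
  apply Finset.prod_le_prod (fun i _ => abs_nonneg _)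
  intro i _
  have := abs_nonneg (bv i); have := abs_nonneg (av i)
  linarith

lemma one_le_Kprod (s : Finset ι) (av bv : ι → ℝ) :
    (1:ℝ) ≤ ∏ i ∈ s, (2*(1+|av i|+|bv i|)) := by
  calc (1:ℝ) = ∏ _i ∈ s, 1 := by simp
  _ ≤ _ := Finset.prod_le_prod (fun i _ => by norm_num)
      (fun i _ => by
        have := abs_nonneg (bv i); have := abs_nonneg (av i); linarith)

/-- First-order expansion of a product of affine functions, with error bound. -/
lemma lemCL (s : Finset ι) (av bv : ι → ℝ) (t : ℝ) (ht0 : 0 ≤ t) (ht1 : t ≤ 1) :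
    |∑ i ∈ s, bv i * ∏ j ∈ s.erase i, av j| ≤ ∏ i ∈ s, (2*(1+|av i|+|bv i|)) ∧
    |(∏ i ∈ s, (av i + t * bv i)) - (∏ i ∈ s, av i)
        - t * ∑ i ∈ s, bv i * ∏ j ∈ s.erase i, av j|
      ≤ t^2 * ∏ i ∈ s, (2*(1+|av i|+|bv i|)) := by
  classical
  induction s using Finset.induction_on with
  | empty =>
    constructor
    · simp
    · simp [abs_nonneg]
      positivity
  | insert b s ha ih =>
    obtain ⟨ih1, ih2⟩ := ih
    set K := ∏ i ∈ s, (2*(1+|av i|+|bv i|)) with hK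
    set G := ∑ i ∈ s, bv i * ∏ j ∈ s.erase i, av j with hG
    set g0 := ∏ i ∈ s, av i with hg0
    set gt := ∏ i ∈ s, (av i + t * bv i) with hgt
    have hK0 : (0:ℝ) ≤ K := le_trans zero_le_one (one_le_Kprod s av bv)
    have hg0K : |g0| ≤ K := abs_prod_le s av bv
    have hY : |gt - g0| ≤ 2 * t * K := by
      have h1 : |gt - g0| ≤ |gt - g0 - t * G| + |t * G| := by
        have := abs_add_le (gt - g0 - t * G) (t * G); simpa using this
      have h2 : |t * G| ≤ t * K := by
        rw [abs_mul, abs_of_nonneg ht0]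
        exact mul_le_mul_of_nonneg_left ih1 ht0
      have ht2 : t^2 ≤ t := by nlinarith
      have := mul_le_mul_of_nonneg_right ht2 hK0
      linarith
    have e2 : ∏ i ∈ insert b s, (av i + t * bv i) = (av b + t * bv b) * gt :=
      prod_insert ha
    have e1 : ∏ i ∈ insert b s, av i = av b * g0 := prod_insert ha
    have eK : ∏ i ∈ insert b s, (2*(1+|av i|+|bv i|)) = 2*(1+|av b|+|bv b|) * K :=
      prod_insert ha
    have e3 : ∑ i ∈ insert b s, bv i * ∏ j ∈ (insert b s).erase i, av j
        = bv b * g0 + av b * G := by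
      rw [sum_insert ha, erase_insert ha]
      congr 1
      rw [hG, mul_sum]
      apply Finset.sum_congr rfl
      intro i hi
      have hbi : b ≠ i := fun h => ha (h ▸ hi)
      rw [Finset.erase_insert_of_ne hbi,
        prod_insert (fun h => ha (mem_of_mem_erase h))]
      ring
    rw [e1, e2, e3, eK]
    constructor
    · calc |bv b * g0 + av b * G| ≤ |bv b * g0| + |av b * G| := abs_add_le _ _
      _ ≤ |bv b| * K + |av b| * K := by
          rw [abs_mul, abs_mul]
          exact add_le_add (mul_le_mul_of_nonneg_left hg0K (abs_nonneg _))
            (mul_le_mul_of_nonneg_left ih1 (abs_nonneg _))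
      _ ≤ 2*(1+|av b|+|bv b|) * K := by nlinarith [abs_nonneg (av b), abs_nonneg (bv b), hK0]
    · have key : (av b + t * bv b) * gt - av b * g0 - t * (bv b * g0 + av b * G)
          = av b * (gt - g0 - t * G) + t * bv b * (gt - g0) := by ring
      rw [key]
      calc |av b * (gt - g0 - t * G) + t * bv b * (gt - g0)|
          ≤ |av b * (gt - g0 - t * G)| + |t * bv b * (gt - g0)| := abs_add_le _ _
        _ ≤ |av b| * (t^2 * K) + t * |bv b| * (2 * t * K) := by
            rw [abs_mul, abs_mul, abs_mul, abs_of_nonneg ht0]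
            refine add_le_add (mul_le_mul_of_nonneg_left ih2 (abs_nonneg _)) ?_
            have : |bv b| * |gt - g0| ≤ |bv b| * (2 * t * K) :=
              mul_le_mul_of_nonneg_left hY (abs_nonneg _)
            nlinarith [ht0]
        _ ≤ t^2 * (2*(1+|av b|+|bv b|) * K) := by
            nlinarith [mul_nonneg (mul_nonneg (sq_nonneg t) hK0) (abs_nonneg (av b)),
              mul_nonneg (sq_nonneg t) hK0]

lemma pair_le_E (s : Finset ι) (β : ι → ℝ) (hβ : ∀ i ∈ s, 0 ≤ β i) (i0 j0 : ι)
    (hi0 : i0 ∈ s) (hj0 : j0 ∈ s) (hne : i0 ≠ j0) :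
    β i0 * β j0 ≤ ((∑ i ∈ s, β i)^2 - ∑ i ∈ s, (β i)^2) / 2 := by
  classical
  have hSplit : ∑ i ∈ s, β i = β i0 + ∑ i ∈ s.erase i0, β i :=
    (Finset.add_sum_erase s β hi0).symm
  have hSplit2 : ∑ i ∈ s, (β i)^2 = (β i0)^2 + ∑ i ∈ s.erase i0, (β i)^2 :=
    (Finset.add_sum_erase s (fun i => (β i)^2) hi0).symm
  have hβ' : ∀ i ∈ s.erase i0, 0 ≤ β i := fun i hi => hβ i (mem_of_mem_erase hi)
  have h1 : β j0 ≤ ∑ i ∈ s.erase i0, β i :=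
    Finset.single_le_sum hβ' (mem_erase.mpr ⟨hne.symm, hj0⟩)
  have h2 : ∑ i ∈ s.erase i0, (β i)^2 ≤ (∑ i ∈ s.erase i0, β i)^2 :=
    Finset.sum_sq_le_sq_sum_of_nonneg hβ'
  have h3 : 0 ≤ β i0 := hβ i0 hi0
  have h4 : 0 ≤ β j0 := hβ j0 hj0
  rw [hSplit, hSplit2]
  nlinarith [h1, h2, h3, h4, mul_le_mul_of_nonneg_left h1 h3]

end Aux

lemma Xfun_ge (n : ℕ) (a : ℝ) (x N : Fin n → ℝ) (hx : ∀ i, 0 ≤ x i)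
    (hN : ∀ i, 1 ≤ N i) : a ≤ Xfun n a x N := by
  unfold Xfun
  have h1 : (1:ℝ) ≤ ∏ k, (1 + x k) :=
    one_le_prod_one_add univ x (fun i _ => hx i)
  have h2 : 0 ≤ ∑ k, (N k - 1) * x k :=
    Finset.sum_nonneg fun i _ => mul_nonneg (by linarith [hN i]) (hx i)
  linarith

set_option maxHeartbeats 2000000 in
theorem stmt1 (n : ℕ) (hn : 2 ≤ n) (a : ℝ) (ha0 : 0 < a) (ha1 : a < 1)
    (L Nlo Nhi : Fin n → ℝ) (hL : ∀ i, 0 < L i)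
    (hNlo : ∀ i, 1 ≤ Nlo i) (hNhi : ∀ i, Nlo i ≤ Nhi i)
    (xs : Fin n → ℝ) (hxs : ∀ i, 0 ≤ xs i) (hB : hfun n a xs = 1)
    (D : Set (Fin n → ℝ)) (hDconv : Convex ℝ D)
    (hDR : D ⊆ rateRegion n a L Nlo Nhi)
    (hDs : sVec n a L xs Nhi ∈ D) :
    D ⊆ Cset n L Nhi xs := by
  intro u hu
  have hNhi1 : ∀ i, 1 ≤ Nhi i := fun i => le_trans (hNlo i) (hNhi i)
  have hNhi0 : ∀ i, 0 < Nhi i := fun i => lt_of_lt_of_le zero_lt_one (hNhi1 i)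
  -- nonnegativity of elements of the rate region
  have hRnonneg : ∀ w ∈ rateRegion n a L Nlo Nhi, ∀ i, 0 ≤ w i := by
    intro w hw i
    obtain ⟨x0, N0, hx0, hN0, hw0⟩ := hw
    have hXa : a ≤ Xfun n a x0 N0 :=
      Xfun_ge n a x0 N0 hx0 (fun i => le_trans (hNlo i) (hN0 i).1)
    have hN01 : (1:ℝ) ≤ N0 i := le_trans (hNlo i) (hN0 i).1
    rw [hw0]
    unfold sVec
    apply div_nonneg
    · exact mul_nonneg (mul_nonneg (by linarith) (hL i).le) (hx0 i)
    · linarith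
  have hunn : ∀ i, 0 ≤ u i := hRnonneg u (hDR hu)
  constructor
  · exact hunn
  by_contra hgt
  push_neg at hgt
  -- notation
  set Xst := Xfun n a xs Nhi with hXst
  have hXsta : a ≤ Xst := Xfun_ge n a xs Nhi hxs hNhi1
  have hXst0 : 0 < Xst := lt_of_lt_of_le ha0 hXsta
  set P := ∏ j, (1 + xs j) with hP
  set piv := fun i => ∏ j ∈ Finset.univ.erase i, (1 + xs j) with hpiv
  have h1x : ∀ i, 0 < 1 + xs i := fun i => by linarith [hxs i]
  have hpi : ∀ i, (1 + xs i) * piv i = P := by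
    intro i
    rw [hP, hpiv]
    exact Finset.mul_prod_erase univ (fun j => 1 + xs j) (mem_univ i)
  have hpiv1 : ∀ i, (1:ℝ) ≤ piv i := fun i =>
    one_le_prod_one_add _ _ (fun j hj => hxs j)
  have hP0 : 0 < P := Finset.prod_pos fun i _ => h1x i
  -- consequence of the boundary condition
  have hsum : ∑ i, xs i * piv i = P - (1 - a) := by
    have hB' : (∑ i, xs i / (1 + xs i)) + (1 - a) / P = 1 := hB
    have e1 : ∀ i, xs i * piv i = (xs i / (1 + xs i)) * P := by
      intro i
      have hne := (h1x i).ne'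
      rw [← hpi i]
      field_simp
    calc ∑ i, xs i * piv i = ∑ i, (xs i / (1 + xs i)) * P :=
          Finset.sum_congr rfl fun i _ => e1 i
    _ = (∑ i, xs i / (1 + xs i)) * P := by rw [← Finset.sum_mul]
    _ = (1 - (1 - a) / P) * P := by rw [show (∑ i, xs i / (1 + xs i)) = 1 - (1-a)/P by linarith]
    _ = P - (1 - a) := by field_simp
  -- Xst in terms of P
  have hXstdef : Xst = a + (∑ k, (Nhi k - 1) * xs k) + P - 1 := rfl
  -- key1 : the hyperplane passes through sstar
  set sst := sVec n a L xs Nhi with hsst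
  have hsst_i : ∀ i, sst i = Nhi i * L i * xs i / Xst := fun i => rfl
  have key1 : ∑ i, alpha n L Nhi xs i * sst i = 1 := by
    have e1 : ∀ i, alpha n L Nhi xs i * sst i = (Nhi i - 1 + piv i) * xs i / Xst := by
      intro i
      rw [hsst_i i]
      unfold alpha
      have hpivi : (∏ j ∈ Finset.univ.erase i, (1 + xs j)) = piv i := rfl
      rw [hpivi]
      have h1 := (hL i).ne'
      have h2 := (hNhi0 i).ne'
      have h3 := hXst0.ne'
      field_simp
    rw [Finset.sum_congr rfl fun i _ => e1 i, ← Finset.sum_div]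
    rw [div_eq_one_iff_eq (ne_of_gt hXst0)]
    have e2 : ∑ i, (Nhi i - 1 + piv i) * xs i
        = (∑ i, (Nhi i - 1) * xs i) + ∑ i, xs i * piv i := by
      rw [← Finset.sum_add_distrib]
      exact Finset.sum_congr rfl fun i _ => by ring
    rw [e2, hsum, hXstdef]
    ring
  -- two positive coordinates
  obtain ⟨i0, j0, hij, hxi0, hxj0⟩ :
      ∃ i0 j0 : Fin n, i0 ≠ j0 ∧ 0 < xs i0 ∧ 0 < xs j0 := by
    by_contra hcon
    push_neg at hcon
    by_cases hex : ∃ i, 0 < xs i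
    · obtain ⟨i1, hi1⟩ := hex
      have hz : ∀ j, j ≠ i1 → xs j = 0 := by
        intro j hj
        have := hcon i1 j (fun h => hj (by rw [h]) ) hi1
        linarith [hxs j]
      have hpii1 : piv i1 = 1 := by
        rw [hpiv]
        apply Finset.prod_eq_one
        intro j hj
        rw [hz j (Finset.ne_of_mem_erase hj)]
        norm_num
      have hPeq : P = 1 + xs i1 := by rw [← hpi i1, hpii1, mul_one]
      have hsum1 : ∑ i, xs i * piv i = xs i1 * piv i1 :=
        Finset.sum_eq_single_of_mem i1 (mem_univ i1)
          (fun j _ hj => by rw [hz j hj]; ring)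
      rw [hsum1, hpii1, hPeq] at hsum
      linarith
    · push_neg at hex
      have hz : ∀ j, xs j = 0 := fun j => le_antisymm (hex j) (hxs j)
      have hP1 : P = 1 := by
        rw [hP]; apply Finset.prod_eq_one; intro j _; rw [hz j]; norm_num
      have hzz : ∑ i, xs i * piv i = 0 :=
        Finset.sum_eq_zero fun i _ => by rw [hz i]; ring
      rw [hzz, hP1] at hsum
      linarith
  -- direction and margin
  set γ := fun i => (u i - sst i) / (Nhi i * L i) with hγ
  set ε := (∑ i, alpha n L Nhi xs i * u i) - 1 with hε
  have hε0 : 0 < ε := by rw [hε]; linarith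
  have hεγ : ∑ i, (Nhi i - 1 + piv i) * γ i = ε := by
    have e1 : ∀ i, (Nhi i - 1 + piv i) * γ i
        = alpha n L Nhi xs i * u i - alpha n L Nhi xs i * sst i := by
      intro i
      unfold alpha
      have hpivi : (∏ j ∈ Finset.univ.erase i, (1 + xs j)) = piv i := rfl
      rw [hpivi, hγ]
      have h1 := (hL i).ne'
      have h2 := (hNhi0 i).ne'
      field_simp
    rw [Finset.sum_congr rfl fun i _ => e1 i, Finset.sum_sub_distrib, key1, hε]
  -- constants
  set Kw := ∏ i, (2*(1+|1 + xs i|+|Xst * γ i|)) with hKw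
  have hKw1 : (1:ℝ) ≤ Kw := one_le_Kprod univ _ _
  set avi := fun (i j : Fin n) => if j = i then xs i / Xst else 1 + xs j with havi
  set bvi := fun (i j : Fin n) => if j = i then γ i else Xst * γ j with hbvi
  set Ki := fun i => ∏ j, (2*(1+|avi i j|+|bvi i j|)) with hKi
  have hKi1 : ∀ i, (1:ℝ) ≤ Ki i := fun i => one_le_Kprod univ _ _
  set C1 := (∑ i, 2 * Ki i) + |∑ i, (Nhi i - 1) * γ i| with hC1
  have hC10 : 0 ≤ C1 := by
    have : (0:ℝ) ≤ ∑ i, 2 * Ki i :=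
      Finset.sum_nonneg fun i _ => by linarith [hKi1 i]
    have := abs_nonneg (∑ i, (Nhi i - 1) * γ i)
    rw [hC1]; linarith
  set bq := (xs i0 / Xst) * (xs j0 / Xst) / 4 with hbq
  have hbq0 : 0 < bq := by
    rw [hbq]
    have h1 : 0 < xs i0 / Xst := div_pos hxi0 hXst0
    have h2 : 0 < xs j0 / Xst := div_pos hxj0 hXst0
    positivity
  -- choice of t
  set tb1 := xs i0 / Xst / (2 * (|γ i0| + 1)) with htb1
  set tb2 := xs j0 / Xst / (2 * (|γ j0| + 1)) with htb2
  set tep := Xst * ε / (2 * (Kw + C1^2/(4*bq) + 1)) with htep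
  have htb1p : 0 < tb1 := by
    rw [htb1]
    have := abs_nonneg (γ i0)
    have h1 : 0 < xs i0 / Xst := div_pos hxi0 hXst0
    positivity
  have htb2p : 0 < tb2 := by
    rw [htb2]
    have := abs_nonneg (γ j0)
    have h1 : 0 < xs j0 / Xst := div_pos hxj0 hXst0
    positivity
  have htepp : 0 < tep := by
    rw [htep]
    have h1 : 0 < Xst * ε := mul_pos hXst0 hε0
    have h2 : 0 < Kw + C1^2/(4*bq) + 1 := by
      have : 0 ≤ C1^2/(4*bq) := div_nonneg (sq_nonneg _) (by linarith)
      linarith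
    exact div_pos h1 (by linarith)
  set t := min 1 (min tb1 (min tb2 tep)) with ht
  have ht0 : 0 < t := by
    rw [ht]
    exact lt_min zero_lt_one (lt_min htb1p (lt_min htb2p htepp))
  have ht1 : t ≤ 1 := min_le_left _ _
  have httb1 : t ≤ tb1 := le_trans (min_le_right _ _) (min_le_left _ _)
  have httb2 : t ≤ tb2 :=
    le_trans (min_le_right _ _) (le_trans (min_le_right _ _) (min_le_left _ _))
  have httep : t ≤ tep :=
    le_trans (min_le_right _ _) (le_trans (min_le_right _ _) (min_le_right _ _))
  -- the segment point lies in the rate region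
  have hyD : (1 - t) • sst + t • u ∈ D :=
    hDconv hDs hu (by linarith) ht0.le (by ring)
  obtain ⟨x, N, hx, hN, hyeq⟩ := hDR hyD
  set τ := Xfun n a x N with hτdef
  have hτa : a ≤ τ := Xfun_ge n a x N hx (fun i => le_trans (hNlo i) (hN i).1)
  have hτ0 : 0 < τ := lt_of_lt_of_le ha0 hτa
  have hN1 : ∀ i, (1:ℝ) ≤ N i := fun i => le_trans (hNlo i) (hN i).1
  set y := fun i => sst i + t * (u i - sst i) with hy
  have hyi : ∀ i, y i = N i * L i * x i / τ := by
    intro i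
    have h1 := congr_fun hyeq i
    simp only [Pi.add_apply, Pi.smul_apply, smul_eq_mul] at h1
    have h2 : sVec n a L x N i = N i * L i * x i / τ := rfl
    rw [h2] at h1
    rw [hy]
    simp only []
    linarith [h1]
  have hy0 : ∀ i, 0 ≤ y i := by
    intro i
    rw [hyi i]
    apply div_nonneg _ hτ0.le
    exact mul_nonneg (mul_nonneg (by linarith [hN1 i]) (hL i).le) (hx i)
  have hNLx : ∀ i, N i * L i * x i = τ * y i := by
    intro i
    rw [hyi i]
    field_simp
  set βt := fun i => y i / (Nhi i * L i) with hβt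
  have hβt0 : ∀ i, 0 ≤ βt i :=
    fun i => div_nonneg (hy0 i) (mul_nonneg (hNhi0 i).le (hL i).le)
  have hβteq : ∀ i, βt i = xs i / Xst + t * γ i := by
    intro i
    have hss : sst i / (Nhi i * L i) = xs i / Xst := by
      rw [hsst_i i]
      have h1 := (hL i).ne'
      have h2 := (hNhi0 i).ne'
      have h3 := hXst0.ne'
      field_simp
    have : βt i = sst i / (Nhi i * L i) + t * ((u i - sst i) / (Nhi i * L i)) := by
      rw [hβt]
      simp only [hy]
      rw [add_div, mul_div_assoc]
    rw [this, hss, hγ]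
  have hxβ : ∀ i, τ * βt i ≤ x i := by
    intro i
    have hpos : 0 < Nhi i * L i := mul_pos (hNhi0 i) (hL i)
    have h1 : τ * βt i = N i * L i * x i / (Nhi i * L i) := by
      rw [hβt]
      simp only []
      rw [mul_div_assoc']
      rw [hNLx i]
    rw [h1, div_le_iff₀ hpos]
    have h2 : N i ≤ Nhi i := (hN i).2
    have h5 : N i * L i ≤ Nhi i * L i := mul_le_mul_of_nonneg_right h2 (hL i).le
    calc N i * L i * x i ≤ Nhi i * L i * x i := mul_le_mul_of_nonneg_right h5 (hx i)
    _ = x i * (Nhi i * L i) := by ring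
  set σv := ∑ i, Nhi i * βt i with hσv
  have hσy : ∀ i, Nhi i * βt i = y i / L i := by
    intro i
    rw [hβt]
    simp only []
    have h1 := (hL i).ne'
    have h2 := (hNhi0 i).ne'
    field_simp
  have hH : (∏ i, (1 + x i)) - 1 - ∑ i, x i = τ * (1 - σv) - a := by
    have h1 : ∀ i, N i * x i = τ * (Nhi i * βt i) := by
      intro i
      rw [hσy i]
      have hLne := (hL i).ne'
      rw [mul_div_assoc']
      rw [← hNLx i]
      field_simp
    have h3 : ∑ k, (N k - 1) * x k = τ * σv - ∑ k, x k := by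
      have e : ∀ k, (N k - 1) * x k = τ * (Nhi k * βt k) - x k := by
        intro k; rw [← h1 k]; ring
      rw [Finset.sum_congr rfl fun k _ => e k, Finset.sum_sub_distrib, ← Finset.mul_sum, hσv]
    have h4 : τ = a + (∑ k, (N k - 1) * x k) + (∏ k, (1 + x k)) - 1 := rfl
    rw [h3] at h4
    linarith [h4]
  -- inequality chain
  have step1 : (∏ i, (1 + τ * βt i)) + ∑ i, (x i - τ * βt i) ≤ ∏ i, (1 + x i) :=
    lemLB univ (fun i => τ * βt i) x
      (fun i _ => mul_nonneg hτ0.le (hβt0 i)) (fun i _ => hxβ i)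
  set A := ∑ i, βt i * ∏ j ∈ Finset.univ.erase i, (1 + Xst * βt j) with hA
  set E2 := ((∑ i, βt i)^2 - ∑ i, (βt i)^2)/2 with hE2
  have step2 : (∏ i, (1 + Xst * βt i)) + (τ - Xst) * A + (τ - Xst)^2 * E2
      ≤ ∏ i, (1 + τ * βt i) :=
    lemLA univ βt (fun i _ => hβt0 i) Xst τ hXst0.le hτ0.le
  set E1 := A - (∑ i, βt i) - 1 + σv with hE1
  set ω := (∏ i, (1 + Xst * βt i)) - 1 - (∑ i, Xst * βt i) - Xst * (1 - σv) + a
    with hω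
  clear_value Xst P piv sst γ ε Kw C1 bq tb1 tb2 tep t τ y βt σv A E2 E1 ω
  have hmain : ω + (τ - Xst) * E1 + (τ - Xst)^2 * E2 ≤ 0 := by
    have c1 : (∏ i, (1 + τ * βt i)) - 1 - ∑ i, τ * βt i ≤ τ * (1 - σv) - a := by
      have hs : ∑ i, (x i - τ * βt i) = (∑ i, x i) - ∑ i, τ * βt i :=
        by simp only [Finset.sum_sub_distrib]
      linarith [step1, hH, hs]
    have c2 : ∑ i, Xst * βt i = Xst * ∑ i, βt i := (Finset.mul_sum _ _ _).symm
    have c3 : ∑ i, τ * βt i = τ * ∑ i, βt i := (Finset.mul_sum _ _ _).symm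
    rw [hω, hE1]
    rw [c3] at c1
    rw [c2]
    linarith [step2, c1]
    
  -- lower bound on E2
  have hti0 : xs i0 / Xst / 2 ≤ βt i0 := by
    rw [hβteq i0]
    have h2 : (0:ℝ) < |γ i0| + 1 := by positivity
    have h1 : t * (|γ i0| + 1) ≤ xs i0 / Xst / 2 := by
      calc t * (|γ i0| + 1) ≤ tb1 * (|γ i0| + 1) :=
            mul_le_mul_of_nonneg_right httb1 h2.le
      _ = xs i0 / Xst / 2 := by rw [htb1]; field_simp
    have h4 : t * -|γ i0| ≤ t * γ i0 :=
      mul_le_mul_of_nonneg_left (neg_abs_le (γ i0)) ht0.le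
    have h5 : t * (|γ i0| + 1) = t * |γ i0| + t := by ring
    have h6 : t * -|γ i0| = -(t * |γ i0|) := by ring
    linarith [h1, h4, ht0.le, h5, h6]
  have htj0 : xs j0 / Xst / 2 ≤ βt j0 := by
    rw [hβteq j0]
    have h2 : (0:ℝ) < |γ j0| + 1 := by positivity
    have h1 : t * (|γ j0| + 1) ≤ xs j0 / Xst / 2 := by
      calc t * (|γ j0| + 1) ≤ tb2 * (|γ j0| + 1) :=
            mul_le_mul_of_nonneg_right httb2 h2.le
      _ = xs j0 / Xst / 2 := by rw [htb2]; field_simp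
    have h4 : t * -|γ j0| ≤ t * γ j0 :=
      mul_le_mul_of_nonneg_left (neg_abs_le (γ j0)) ht0.le
    have h5 : t * (|γ j0| + 1) = t * |γ j0| + t := by ring
    have h6 : t * -|γ j0| = -(t * |γ j0|) := by ring
    linarith [h1, h4, ht0.le, h5, h6]
  have hE2b : bq ≤ E2 := by
    have hp := pair_le_E univ βt (fun i _ => hβt0 i) i0 j0 (mem_univ _) (mem_univ _) hij
    have a1 : (0:ℝ) ≤ xs i0 / Xst / 2 := by
      have := div_pos hxi0 hXst0; linarith
    have a2 : (0:ℝ) ≤ xs j0 / Xst / 2 := by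
      have := div_pos hxj0 hXst0; linarith
    have h1 : (xs i0 / Xst / 2) * (xs j0 / Xst / 2) ≤ βt i0 * βt j0 :=
      mul_le_mul hti0 htj0 a2 (le_trans a1 hti0)
    have h2 : bq = (xs i0 / Xst / 2) * (xs j0 / Xst / 2) := by rw [hbq]; ring
    rw [hE2]
    linarith [hp, h1]
  -- lower bound on ω
  have homega : t * (Xst * ε) - t^2 * Kw ≤ ω := by
    obtain ⟨hG1b, hgb⟩ := lemCL univ (fun i => 1 + xs i) (fun i => Xst * γ i) t ht0.le ht1
    have hprod_eq : ∏ i, (1 + Xst * βt i) = ∏ i, ((1 + xs i) + t * (Xst * γ i)) := by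
      apply Finset.prod_congr rfl
      intro i _
      rw [hβteq i, mul_add, mul_div_cancel₀ _ hXst0.ne']
      ring
    have hG1eq : (∑ i, (Xst * γ i) * ∏ j ∈ Finset.univ.erase i, (1 + xs j))
        = Xst * ∑ i, γ i * piv i := by
      rw [Finset.mul_sum]
      apply Finset.sum_congr rfl
      intro i _
      have hpivi : piv i = ∏ j ∈ Finset.univ.erase i, (1 + xs j) := by rw [hpiv]
      rw [hpivi]
      ring
    rw [hG1eq] at hgb
    rw [← hP] at hgb
    rw [← hKw] at hgb
    have hlow := (abs_le.mp hgb).1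
    -- expansions
    have e1 : ∑ i, Xst * βt i = (∑ i, xs i) + t * (Xst * ∑ i, γ i) := by
      have e : ∀ i, Xst * βt i = xs i + t * (Xst * γ i) := by
        intro i
        rw [hβteq i, mul_add, mul_div_cancel₀ _ hXst0.ne']
        ring
      rw [Finset.sum_congr rfl fun i _ => e i, Finset.sum_add_distrib,
        ← Finset.mul_sum, ← Finset.mul_sum]
    have e2 : Xst * σv = (∑ i, Nhi i * xs i) + t * (Xst * ∑ i, Nhi i * γ i) := by
      rw [hσv, Finset.mul_sum]
      have e : ∀ i, Xst * (Nhi i * βt i) = Nhi i * xs i + t * (Xst * (Nhi i * γ i)) := by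
        intro i
        rw [hβteq i]
        field_simp
      rw [Finset.sum_congr rfl fun i _ => e i, Finset.sum_add_distrib,
        ← Finset.mul_sum, ← Finset.mul_sum]
    have h6 : ∑ k, (Nhi k - 1) * xs k = (∑ k, Nhi k * xs k) - ∑ k, xs k := by
      rw [← Finset.sum_sub_distrib]
      apply Finset.sum_congr rfl
      intro i _; ring
    have e3 : P - 1 - (∑ i, xs i) - Xst + (∑ i, Nhi i * xs i) + a = 0 := by
      rw [hXstdef]
      linarith [h6]
    have e4 : (∑ i, γ i * piv i) - (∑ i, γ i) + (∑ i, Nhi i * γ i) = ε := by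
      rw [← hεγ, ← Finset.sum_sub_distrib, ← Finset.sum_add_distrib]
      apply Finset.sum_congr rfl
      intro i _; ring
    have e5 : t * (Xst * (∑ i, γ i * piv i)) = t * (Xst * ε)
        + t * (Xst * (∑ i, γ i)) - t * (Xst * (∑ i, Nhi i * γ i)) := by
      rw [← e4]; ring
    rw [hω, hprod_eq]
    linarith [hlow, e1, e2, e3, e5]
  -- bound on E1
  have hE1b : |E1| ≤ t * C1 := by
    have hterm : ∀ i : Fin n,
        |βt i * (∏ j ∈ Finset.univ.erase i, (1 + Xst * βt j))
          - (xs i / Xst) * piv i| ≤ 2 * t * Ki i := by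
      intro i
      obtain ⟨hb1, hb2⟩ := lemCL univ (avi i) (bvi i) t ht0.le ht1
      have id1 : (∏ j, (avi i j + t * bvi i j))
          = βt i * ∏ j ∈ Finset.univ.erase i, (1 + Xst * βt j) := by
        rw [← Finset.mul_prod_erase univ (fun j => avi i j + t * bvi i j) (mem_univ i)]
        congr 1
        · rw [havi, hbvi]
          simp only [eq_self_iff_true, if_true]
          rw [hβteq i]
        · apply Finset.prod_congr rfl
          intro j hj
          have hji : j ≠ i := (mem_erase.mp hj).1
          rw [havi, hbvi]
          simp only [if_neg hji]
          rw [hβteq j, mul_add, mul_div_cancel₀ _ hXst0.ne']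
          ring
      have id2 : (∏ j, avi i j) = (xs i / Xst) * piv i := by
        rw [← Finset.mul_prod_erase univ (avi i) (mem_univ i)]
        congr 1
        · rw [havi]; simp only [eq_self_iff_true, if_true]
        · rw [hpiv, havi]
          apply Finset.prod_congr rfl
          intro j hj
          simp only [if_neg (mem_erase.mp hj).1]
      have hKieq : (∏ j, (2*(1+|avi i j|+|bvi i j|))) = Ki i := by rw [hKi]
      rw [id1, id2, hKieq] at hb2
      rw [hKieq] at hb1
      have h1 : |βt i * (∏ j ∈ Finset.univ.erase i, (1 + Xst * βt j))
            - (xs i / Xst) * piv i|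
          ≤ |βt i * (∏ j ∈ Finset.univ.erase i, (1 + Xst * βt j))
            - (xs i / Xst) * piv i
            - t * ∑ j, bvi i j * ∏ k ∈ Finset.univ.erase j, avi i k|
          + |t * ∑ j, bvi i j * ∏ k ∈ Finset.univ.erase j, avi i k| := by
        have := abs_add_le (βt i * (∏ j ∈ Finset.univ.erase i, (1 + Xst * βt j))
            - (xs i / Xst) * piv i
            - t * ∑ j, bvi i j * ∏ k ∈ Finset.univ.erase j, avi i k)
          (t * ∑ j, bvi i j * ∏ k ∈ Finset.univ.erase j, avi i k)
        simpa using this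
      have h2 : |t * ∑ j, bvi i j * ∏ k ∈ Finset.univ.erase j, avi i k|
          ≤ t * Ki i := by
        rw [abs_mul, abs_of_nonneg ht0.le]
        exact mul_le_mul_of_nonneg_left hb1 ht0.le
      have ht2 : t^2 ≤ t := by
        have := mul_le_mul_of_nonneg_left ht1 ht0.le
        nlinarith only [this]
      have hKnn : (0:ℝ) ≤ Ki i := le_trans zero_le_one (hKi1 i)
      have h3 := mul_le_mul_of_nonneg_right ht2 hKnn
      linarith only [hb2, h1, h2, h3]
    -- expansions
    have eS : ∑ i, βt i = (∑ i, xs i)/Xst + t * ∑ i, γ i := by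
      have e : ∀ i, βt i = xs i / Xst + t * γ i := hβteq
      rw [Finset.sum_congr rfl fun i _ => e i, Finset.sum_add_distrib,
        ← Finset.mul_sum, ← Finset.sum_div]
    have eσ : σv = (∑ i, Nhi i * xs i)/Xst + t * ∑ i, Nhi i * γ i := by
      rw [hσv]
      have e : ∀ i, Nhi i * βt i = (Nhi i * xs i) / Xst + t * (Nhi i * γ i) := by
        intro i
        rw [hβteq i]
        field_simp
      rw [Finset.sum_congr rfl fun i _ => e i, Finset.sum_add_distrib,
        ← Finset.mul_sum, ← Finset.sum_div]
    have eT0 : ∑ i, (xs i / Xst) * piv i = (P - 1 + a) / Xst := by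
      have e : ∀ i, (xs i / Xst) * piv i = (xs i * piv i) / Xst := by
        intro i; ring
      rw [Finset.sum_congr rfl fun i _ => e i, ← Finset.sum_div, hsum]
      ring_nf
    have h6 : ∑ k, (Nhi k - 1) * xs k = (∑ k, Nhi k * xs k) - ∑ k, xs k := by
      rw [← Finset.sum_sub_distrib]
      apply Finset.sum_congr rfl
      intro i _; ring
    have h7 : ∑ i, (Nhi i - 1) * γ i = (∑ i, Nhi i * γ i) - ∑ i, γ i := by
      rw [← Finset.sum_sub_distrib]
      apply Finset.sum_congr rfl
      intro i _; ring
    have ezero : (P - 1 + a)/Xst - (∑ i, xs i)/Xst - 1 + (∑ i, Nhi i * xs i)/Xst = 0 := by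
      have h8 : P - 1 + a - (∑ i, xs i) + (∑ i, Nhi i * xs i) = Xst := by
        rw [hXstdef]; linarith [h6]
      field_simp
      linarith [h8]
    have esplit : ∑ i, (βt i * (∏ j ∈ Finset.univ.erase i, (1 + Xst * βt j))
          - (xs i / Xst) * piv i)
        = (∑ i, βt i * ∏ j ∈ Finset.univ.erase i, (1 + Xst * βt j))
          - ∑ i, (xs i / Xst) * piv i := Finset.sum_sub_distrib _ _
    have eE1 : E1 = (∑ i, (βt i * (∏ j ∈ Finset.univ.erase i, (1 + Xst * βt j))
          - (xs i / Xst) * piv i)) + t * (∑ i, (Nhi i - 1) * γ i) := by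
      rw [hE1, hA, eS, eσ, esplit, eT0, h7]
      linear_combination ezero
    rw [eE1]
    have habs1 : |∑ i, (βt i * (∏ j ∈ Finset.univ.erase i, (1 + Xst * βt j))
          - (xs i / Xst) * piv i)|
        ≤ ∑ i, |βt i * (∏ j ∈ Finset.univ.erase i, (1 + Xst * βt j))
          - (xs i / Xst) * piv i| := Finset.abs_sum_le_sum_abs _ _
    have habs2 : ∑ i, |βt i * (∏ j ∈ Finset.univ.erase i, (1 + Xst * βt j))
          - (xs i / Xst) * piv i| ≤ ∑ i, 2 * t * Ki i :=
      Finset.sum_le_sum fun i _ => hterm i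
    have habs3 : ∑ i, 2 * t * Ki i = t * ∑ i, 2 * Ki i := by
      rw [Finset.mul_sum]
      apply Finset.sum_congr rfl
      intro i _; ring
    have habs4 : |t * (∑ i, (Nhi i - 1) * γ i)| = t * |∑ i, (Nhi i - 1) * γ i| := by
      rw [abs_mul, abs_of_nonneg ht0.le]
    calc |(∑ i, (βt i * (∏ j ∈ Finset.univ.erase i, (1 + Xst * βt j))
          - (xs i / Xst) * piv i)) + t * (∑ i, (Nhi i - 1) * γ i)|
        ≤ |∑ i, (βt i * (∏ j ∈ Finset.univ.erase i, (1 + Xst * βt j))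
          - (xs i / Xst) * piv i)| + |t * (∑ i, (Nhi i - 1) * γ i)| := abs_add_le _ _
      _ ≤ t * C1 := by
        rw [hC1, habs4]
        have := le_trans habs1 (le_of_le_of_eq habs2 habs3)
        have hmul : t * (∑ i, 2 * Ki i) + t * |∑ i, (Nhi i - 1) * γ i|
            = t * ((∑ i, 2 * Ki i) + |∑ i, (Nhi i - 1) * γ i|) := by ring
        linarith [this]
  -- endgame
  have hE2pos : 0 < E2 := lt_of_lt_of_le hbq0 hE2b
  have hmain2 : 0 ≤ E2 * (-(ω + (τ - Xst) * E1 + (τ - Xst)^2 * E2)) :=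
    mul_nonneg hE2pos.le (neg_nonneg.mpr hmain)
  have key : 4 * E2 * ω ≤ E1^2 := by
    nlinarith only [sq_nonneg (2*E2*(τ - Xst) + E1), hmain2]
  have hE1sq : E1^2 ≤ (t*C1)^2 := by
    have h0 : (0:ℝ) ≤ |E1| := abs_nonneg E1
    calc E1^2 = |E1|^2 := (sq_abs E1).symm
    _ ≤ (t*C1)^2 := by
      apply pow_le_pow_left₀ h0 hE1b
  have hdnn : (0:ℝ) ≤ C1^2/(4*bq) := div_nonneg (sq_nonneg _) (by linarith)
  have hbound : t * (Kw + C1^2/(4*bq) + 1) ≤ Xst * ε / 2 := by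
    have hd : (0:ℝ) < 2*(Kw + C1^2/(4*bq) + 1) := by linarith
    have h9 := httep
    rw [htep, le_div_iff₀ hd] at h9
    nlinarith only [h9]
  have h8 := mul_le_mul_of_nonneg_left hbound ht0.le
  have hωpos : t^2 * (C1^2/(4*bq)) + t * (Xst*ε) / 2 ≤ ω := by
    have hexp : t * (t * (Kw + C1^2/(4*bq) + 1))
        = t^2 * Kw + t^2 * (C1^2/(4*bq)) + t^2 := by ring
    nlinarith only [homega, h8, sq_nonneg t]
  have hω0 : 0 ≤ ω := by
    have hq1 : 0 ≤ t^2 * (C1^2/(4*bq)) := mul_nonneg (sq_nonneg t) hdnn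
    have hq2 : 0 ≤ t * (Xst*ε) / 2 := by
      have := mul_nonneg ht0.le (mul_nonneg hXst0.le hε0.le)
      linarith
    linarith [hωpos]
  have hfin1 : 4 * bq * ω ≤ 4 * E2 * ω := by
    have := mul_le_mul_of_nonneg_right hE2b hω0
    linarith
  have hfin2 : t^2*C1^2 < 4*bq*ω := by
    have h10 := mul_le_mul_of_nonneg_left hωpos (by linarith : (0:ℝ) ≤ 4*bq)
    have h11 : 4*bq*(t^2*(C1^2/(4*bq))) = t^2*C1^2 := by
      have hbne : (4:ℝ)*bq ≠ 0 := ne_of_gt (by linarith only [hbq0])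
      calc 4*bq*(t^2*(C1^2/(4*bq))) = t^2*(C1^2/(4*bq)*(4*bq)) := by ring
      _ = t^2*C1^2 := by rw [div_mul_cancel₀ _ hbne]
    have h12 : 0 < 4*bq*(t*(Xst*ε)/2) := by
      have h13 : 0 < t*(Xst*ε) := mul_pos ht0 (mul_pos hXst0 hε0)
      have h14 : (0:ℝ) < 4*bq := by linarith only [hbq0]
      have := mul_pos h14 (by linarith only [h13] : (0:ℝ) < t*(Xst*ε)/2)
      linarith only [this]
    nlinarith only [h10, h11, h12]
  have hfin3 : (t*C1)^2 = t^2*C1^2 := by ring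
  linarith only [key, hE1sq, hfin1, hfin2, hfin3]
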